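/- arXiv:2108.00018 — 3 statements merged into one kernel-verified Lean document; each statement's English description precedes it below -/
import Mathlib

section
/- For all odd integers p > q ≥ 1 and every integer n ≥ 2, the cross-section of the fractal cube by the central hyperplane satisfies { x ∈ FC⁽ⁿ⁾(p,q) : xₙ = 1/2 } = { (y, 1/2) : y ∈ FC⁽ⁿ⁻¹⁾(p,q) }. (In particular, for n = 3 the minimal-area cross-section membrane of the fractal cube FC(p,q) is the generalized Sierpiński carpet SC(p,q).) -/
open Set

/-- The digit set `D` of the fractal cube construction: tuples `a ∈ {0,…,p−1}ⁿ` that do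
not lie in the central block `{m,…,m+q−1}ⁿ`, where `m = (p−q)/2`. -/
def digitSet (n p q : ℕ) : Set (Fin n → ℕ) :=
  {a | (∀ i, a i < p) ∧ ¬ ∀ i, (p - q) / 2 ≤ a i ∧ a i ≤ (p - q) / 2 + q - 1}

/-- The contracting similarity `x ↦ (x + a) / p` of `ℝⁿ`. -/
noncomputable def simMap (n p : ℕ) (a : Fin n → ℕ) (x : EuclideanSpace ℝ (Fin n)) :
    EuclideanSpace ℝ (Fin n) :=
  WithLp.toLp 2 (fun i => (x i + a i) / p)

/-- The level-`l` regions `Ωₗ` of the fractal cube construction: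
`Ω₀ = [0,1]ⁿ` and `Ω_{l+1} = ⋃_{a ∈ D} p⁻¹ · (a + Ωₗ)`. -/
noncomputable def levelRegion (n p q : ℕ) : ℕ → Set (EuclideanSpace ℝ (Fin n))
  | 0 => {x | ∀ i, x i ∈ Icc (0 : ℝ) 1}
  | l + 1 => ⋃ a ∈ digitSet n p q, simMap n p a '' levelRegion n p q l

/-- The fractal cube `FC⁽ⁿ⁾(p,q) = ⋂_l Ωₗ`. -/
noncomputable def fractalCube (n p q : ℕ) : Set (EuclideanSpace ℝ (Fin n)) :=
  ⋂ l, levelRegion n p q l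

lemma simMap_apply (n p : ℕ) (a : Fin n → ℕ) (x : EuclideanSpace ℝ (Fin n)) (i : Fin n) :
    simMap n p a x i = (x i + a i) / p := rfl

lemma mem_levelRegion_succ {n p q l : ℕ} {x : EuclideanSpace ℝ (Fin n)} :
    x ∈ levelRegion n p q (l + 1) ↔
      ∃ a ∈ digitSet n p q, ∃ z ∈ levelRegion n p q l, simMap n p a z = x := by
  simp [levelRegion]

lemma levelRegion_subset_cube {n p q : ℕ} (hp : 0 < p) (l : ℕ)
    {x : EuclideanSpace ℝ (Fin n)} (hx : x ∈ levelRegion n p q l) (i : Fin n) :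
    x i ∈ Icc (0 : ℝ) 1 := by
  induction l generalizing x with
  | zero => exact hx i
  | succ l ih =>
    rw [mem_levelRegion_succ] at hx
    obtain ⟨a, ha, z, hz, rfl⟩ := hx
    have h1 := ih hz
    have hai : a i < p := ha.1 i
    have hPpos : (0 : ℝ) < p := by exact_mod_cast hp
    have haiR : (a i : ℝ) + 1 ≤ p := by exact_mod_cast hai
    rw [simMap_apply]
    constructor
    · apply div_nonneg (by have := h1.1; positivity) hPpos.le
    · rw [div_le_one hPpos]
      have := h1.2
      linarith

lemma section_level (m p q : ℕ) (hp : Odd p) (hqo : Odd q) (hq : 1 ≤ q) (hpq : q < p)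
    (l : ℕ) :
    {x : EuclideanSpace ℝ (Fin (m + 1)) |
        x ∈ levelRegion (m + 1) p q l ∧ x (Fin.last m) = 1 / 2} =
      (fun y : EuclideanSpace ℝ (Fin m) =>
          (WithLp.toLp 2 (Fin.snoc (α := fun _ => ℝ) y.ofLp (1 / 2)) : EuclideanSpace ℝ (Fin (m + 1)))) ''
        levelRegion m p q l := by
  obtain ⟨k, hk⟩ := hp
  obtain ⟨j, hj⟩ := hqo
  have hppos : 0 < p := by omega
  have hPpos : (0 : ℝ) < p := by exact_mod_cast hppos
  have hpR : (p : ℝ) = 2 * k + 1 := by exact_mod_cast hk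
  induction l with
  | zero =>
    ext x
    simp only [mem_setOf_eq, mem_image]
    constructor
    · rintro ⟨hx, hlast⟩
      refine ⟨WithLp.toLp 2 (fun i => x i.castSucc), fun i => hx i.castSucc, ?_⟩
      ext i
      refine Fin.lastCases ?_ (fun i => ?_) i
      · simpa using hlast.symm
      · simp
    · rintro ⟨y, hy, rfl⟩
      refine ⟨fun i => ?_, by simp⟩
      refine Fin.lastCases ?_ (fun i => ?_) i
      · simp; norm_num
      · simpa using hy i
  | succ l ih =>
    ext x
    simp only [mem_setOf_eq, mem_image]
    constructor
    · rintro ⟨hx, hlast⟩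
      rw [mem_levelRegion_succ] at hx
      obtain ⟨a, ha, z, hz, rfl⟩ := hx
      have hzc := levelRegion_subset_cube hppos l hz (Fin.last m)
      have hlast' : (z (Fin.last m) + a (Fin.last m)) / p = 1 / 2 := hlast
      have h1 : z (Fin.last m) + (a (Fin.last m) : ℝ) = p / 2 := by
        field_simp at hlast'; linarith
      have halast : a (Fin.last m) = k := by
        have h3 : (a (Fin.last m) : ℝ) < k + 1 := by
          have := hzc.1; linarith [hpR]
        have h4 : (k : ℝ) < a (Fin.last m) + 1 := by
          have := hzc.2; linarith [hpR]
        have h3' : a (Fin.last m) < k + 1 := by exact_mod_cast h3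
        have h4' : k < a (Fin.last m) + 1 := by exact_mod_cast h4
        omega
      have hzlast : z (Fin.last m) = 1 / 2 := by
        rw [halast] at h1; linarith
      have hzmem : z ∈ (fun y : EuclideanSpace ℝ (Fin m) =>
          (WithLp.toLp 2 (Fin.snoc (α := fun _ => ℝ) y.ofLp (1 / 2)) : EuclideanSpace ℝ (Fin (m + 1)))) ''
          levelRegion m p q l := by
        rw [← ih]; exact ⟨hz, hzlast⟩
      obtain ⟨z', hz', hzeq⟩ := hzmem
      set a' : Fin m → ℕ := fun i => a i.castSucc with ha'def
      have ha' : a' ∈ digitSet m p q := by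
        refine ⟨fun i => ha.1 i.castSucc, fun h => ha.2 fun i => ?_⟩
        refine Fin.lastCases ?_ (fun i => h i) i
        rw [halast]; omega
      refine ⟨simMap m p a' z', mem_levelRegion_succ.2 ⟨a', ha', z', hz', rfl⟩, ?_⟩
      ext i
      refine Fin.lastCases ?_ (fun i => ?_) i
      · show _ = simMap (m + 1) p a z (Fin.last m)
        rw [simMap_apply, hzlast, halast]
        simp only [WithLp.ofLp_toLp, Fin.snoc_last]
        rw [hpR]; field_simp; ring
      · show _ = simMap (m + 1) p a z i.castSucc
        rw [simMap_apply]
        simp only [WithLp.ofLp_toLp, Fin.snoc_castSucc, simMap_apply]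
        rw [← hzeq]
        simp [ha'def]
    · rintro ⟨y, hy, rfl⟩
      rw [mem_levelRegion_succ] at hy
      obtain ⟨a', ha', z', hz', rfl⟩ := hy
      set a : Fin (m + 1) → ℕ := Fin.snoc a' k with hadef
      have ha : a ∈ digitSet (m + 1) p q := by
        constructor
        · intro i
          refine Fin.lastCases ?_ (fun i => ?_) i
          · simp [hadef]; omega
          · simpa [hadef] using ha'.1 i
        · intro h
          exact ha'.2 fun i => by simpa [hadef] using h i.castSucc
      have hzmem : (WithLp.toLp 2 (Fin.snoc (α := fun _ => ℝ) z'.ofLp (1 / 2)) : EuclideanSpace ℝ (Fin (m + 1))) ∈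
          levelRegion (m + 1) p q l := by
        have : (WithLp.toLp 2 (Fin.snoc (α := fun _ => ℝ) z'.ofLp (1 / 2)) : EuclideanSpace ℝ (Fin (m + 1))) ∈
            {x : EuclideanSpace ℝ (Fin (m + 1)) |
              x ∈ levelRegion (m + 1) p q l ∧ x (Fin.last m) = 1 / 2} := by
          rw [ih]; exact ⟨z', hz', rfl⟩
        exact this.1
      constructor
      · rw [mem_levelRegion_succ]
        refine ⟨a, ha, WithLp.toLp 2 (Fin.snoc (α := fun _ => ℝ) z'.ofLp (1 / 2)), hzmem, ?_⟩
        ext i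
        refine Fin.lastCases ?_ (fun i => ?_) i
        · show simMap (m + 1) p a _ (Fin.last m) = _
          rw [simMap_apply]
          simp only [WithLp.ofLp_toLp, Fin.snoc_last, hadef]
          rw [hpR]; field_simp; ring
        · show simMap (m + 1) p a _ i.castSucc = _
          rw [simMap_apply]
          simp [hadef, simMap_apply]
      · simp

/-- For all odd integers `p > q ≥ 1` and every integer `n = m + 1 ≥ 2`,
the cross-section of the fractal cube by the central hyperplane satisfies
`{x ∈ FC⁽ⁿ⁾(p,q) : xₙ = 1/2} = {(y, 1/2) : y ∈ FC⁽ⁿ⁻¹⁾(p,q)}`. -/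
theorem fractalCube_central_section (m p q : ℕ) (hm : 1 ≤ m) (hp : Odd p) (hqo : Odd q)
    (hq : 1 ≤ q) (hpq : q < p) :
    {x : EuclideanSpace ℝ (Fin (m + 1)) |
        x ∈ fractalCube (m + 1) p q ∧ x (Fin.last m) = 1 / 2} =
      (fun y : EuclideanSpace ℝ (Fin m) =>
          (WithLp.toLp 2 (Fin.snoc (α := fun _ => ℝ) y.ofLp (1 / 2)) : EuclideanSpace ℝ (Fin (m + 1)))) ''
        fractalCube m p q := by
  ext x
  simp only [mem_setOf_eq, mem_image, fractalCube, mem_iInter]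
  constructor
  · rintro ⟨hx, hlast⟩
    set y : EuclideanSpace ℝ (Fin m) := WithLp.toLp 2 (fun i => x i.castSucc) with hydef
    have hxeq : (WithLp.toLp 2 (Fin.snoc (α := fun _ => ℝ) y.ofLp (1 / 2)) : EuclideanSpace ℝ (Fin (m + 1))) = x := by
      ext i
      refine Fin.lastCases ?_ (fun i => ?_) i
      · simpa using hlast.symm
      · simp [hydef]
    refine ⟨y, fun l => ?_, hxeq⟩
    have hmem : x ∈ (fun y : EuclideanSpace ℝ (Fin m) =>
        (WithLp.toLp 2 (Fin.snoc (α := fun _ => ℝ) y.ofLp (1 / 2)) : EuclideanSpace ℝ (Fin (m + 1)))) ''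
        levelRegion m p q l := by
      rw [← section_level m p q hp hqo hq hpq l]
      exact ⟨hx l, hlast⟩
    obtain ⟨w, hw, hweq⟩ := hmem
    have : w = y := by
      ext i
      have := congrArg (fun v : EuclideanSpace ℝ (Fin (m + 1)) => v i.castSucc) hweq
      simp only [WithLp.ofLp_toLp, Fin.snoc_castSucc] at this
      simp [hydef, this]
    rwa [← this]
  · rintro ⟨y, hy, rfl⟩
    constructor
    · intro l
      have : (WithLp.toLp 2 (Fin.snoc (α := fun _ => ℝ) y.ofLp (1 / 2)) : EuclideanSpace ℝ (Fin (m + 1))) ∈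
          {x : EuclideanSpace ℝ (Fin (m + 1)) |
            x ∈ levelRegion (m + 1) p q l ∧ x (Fin.last m) = 1 / 2} := by
        rw [section_level m p q hp hqo hq hpq l]
        exact ⟨y, hy l, rfl⟩
      exact this.1
    · simp
end

section
/- Let p > q ≥ 1 be odd integers. For every t ∈ (0,1) such that (t, 1/2) ∈ SC(p,q), and for every ε > 0, there exist s₁ ∈ (t − ε, t) ∩ (0,1) and s₂ ∈ (t, t + ε) ∩ (0,1) such that (s₁, 1/2) ∉ SC(p,q) and (s₂, 1/2) ∉ SC(p,q). (Geometric core of the 2D no-go theorem: any logical string crossing the carpet at mid-height passes arbitrarily close to removed holes on both sides, so the carpet supports only O(1)-length dual strings there.) -/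
open Set

/-- The generalized Sierpiński carpet `SC(p,q) := FC⁽²⁾(p,q) ⊆ ℝ²`. -/
noncomputable def sierpinskiCarpet (p q : ℕ) : Set (EuclideanSpace ℝ (Fin 2)) :=
  fractalCube 2 p q

/-- Admissible 1D digits: below `p` and outside the central block. -/
def auxDigits (p q : ℕ) : Set ℕ :=
  {a | a < p ∧ ¬ ((p - q) / 2 ≤ a ∧ a ≤ (p - q) / 2 + q - 1)}

/-- The 1D analogue of the level regions, tracking the x-coordinate on the midline. -/
def auxK (p q : ℕ) : ℕ → Set ℝ
  | 0 => Icc 0 1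
  | l + 1 => ⋃ a ∈ auxDigits p q, (fun x : ℝ => (x + (a : ℝ)) / p) '' auxK p q l

lemma levelRegion_coord_mem (n p q : ℕ) (hp : 1 ≤ p) :
    ∀ l, ∀ z ∈ levelRegion n p q l, ∀ i, z i ∈ Icc (0 : ℝ) 1 := by
  intro l
  induction l with
  | zero => intro z hz i; exact hz i
  | succ l ih =>
    intro z hz i
    simp only [levelRegion, mem_iUnion, mem_image, exists_prop] at hz
    obtain ⟨a, ha, w, hw, rfl⟩ := hz
    have h1 := ih w hw i
    have hp0 : (0 : ℝ) < p := by exact_mod_cast hp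
    have h2 : (a i : ℝ) + 1 ≤ p := by exact_mod_cast ha.1 i
    constructor
    · have : (0:ℝ) ≤ (w i + a i) := by
        have := h1.1; positivity
      exact div_nonneg this hp0.le
    · show (w i + (a i : ℝ)) / p ≤ 1
      rw [div_le_one hp0]
      have := h1.2
      linarith

lemma auxK_subset (p q : ℕ) (hp : 1 ≤ p) : ∀ l, auxK p q l ⊆ Icc (0:ℝ) 1 := by
  intro l
  induction l with
  | zero => exact fun x hx => hx
  | succ l ih =>
    intro x hx
    simp only [auxK, mem_iUnion, mem_image, exists_prop] at hx
    obtain ⟨a, ha, w, hw, rfl⟩ := hx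
    have h1 := ih hw
    have hp0 : (0 : ℝ) < p := by exact_mod_cast hp
    have h2 : (a : ℝ) + 1 ≤ p := by exact_mod_cast ha.1
    constructor
    · have : (0:ℝ) ≤ w + a := by have := h1.1; positivity
      exact div_nonneg this hp0.le
    · rw [div_le_one hp0]; have := h1.2; linarith

lemma mem_auxK_of_midline (p q : ℕ) (hp : Odd p) (hqo : Odd q) (hq : 1 ≤ q) (hpq : q < p) :
    ∀ l (x : ℝ), (WithLp.toLp 2 ![x, 1/2] : EuclideanSpace ℝ (Fin 2)) ∈ levelRegion 2 p q l →
      x ∈ auxK p q l := by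
  obtain ⟨k, hk⟩ := hp
  obtain ⟨jq, hjq⟩ := hqo
  have hp1 : 1 ≤ p := by omega
  have hp0 : (0 : ℝ) < p := by exact_mod_cast hp1
  intro l
  induction l with
  | zero =>
    intro x hx
    have := hx 0
    simpa [auxK] using this
  | succ l ih =>
    intro x hx
    simp only [levelRegion, mem_iUnion, mem_image, exists_prop] at hx
    obtain ⟨a, ha, w, hw, heq⟩ := hx
    have e0 : (w 0 + a 0) / p = x := by
      have := congrArg (fun v : EuclideanSpace ℝ (Fin 2) => v 0) heq
      simpa [simMap] using this
    have e1 : (w 1 + a 1) / p = 1/2 := by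
      have := congrArg (fun v : EuclideanSpace ℝ (Fin 2) => v 1) heq
      simpa [simMap] using this
    have hw1 : w 1 ∈ Icc (0:ℝ) 1 := levelRegion_coord_mem 2 p q hp1 l w hw 1
    have e1' : w 1 + a 1 = (p : ℝ) / 2 := by
      field_simp at e1
      linarith
    -- a 1 = k
    have hpk : (p : ℝ) = 2 * k + 1 := by exact_mod_cast hk
    have hub : (a 1 : ℝ) < k + 1 := by
      have := hw1.1; rw [hpk] at e1'; linarith
    have hlb : (k : ℝ) < (a 1 : ℝ) + 1 := by
      have := hw1.2; rw [hpk] at e1'; linarith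
    have hub' : a 1 < k + 1 := by exact_mod_cast hub
    have hlb' : k < a 1 + 1 := by exact_mod_cast hlb
    have ha1 : a 1 = k := by omega
    have hwhalf : w 1 = 1/2 := by
      rw [ha1] at e1'; rw [hpk] at e1'; linarith
    -- a 1 is central, hence a 0 is not
    have hcent : (p - q) / 2 ≤ a 1 ∧ a 1 ≤ (p - q) / 2 + q - 1 := by omega
    have h0nc : ¬ ((p - q) / 2 ≤ a 0 ∧ a 0 ≤ (p - q) / 2 + q - 1) := by
      intro hc
      apply ha.2
      intro i
      fin_cases i
      · exact hc
      · exact hcent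
    have ha0 : a 0 ∈ auxDigits p q := ⟨ha.1 0, h0nc⟩
    have hwmem : (WithLp.toLp 2 ![w 0, 1/2] : EuclideanSpace ℝ (Fin 2)) ∈ levelRegion 2 p q l := by
      have : (WithLp.toLp 2 ![w 0, 1/2] : EuclideanSpace ℝ (Fin 2)) = w := by
        ext i
        fin_cases i
        · simp
        · simp [hwhalf]
      rw [this]; exact hw
    have hres := ih (w 0) hwmem
    simp only [auxK, mem_iUnion, mem_image, exists_prop]
    exact ⟨a 0, ha0, w 0, hres, e0⟩

lemma auxK_avoid (p q : ℕ) (hq : 1 ≤ q) (hpq : q < p) (hp2 : p % 2 = 1) (hq2 : q % 2 = 1) :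
    ∀ l (x : ℝ), x ∈ auxK p q l → ∀ j : ℕ, j % p = (p - q) / 2 →
      ¬ ((j : ℝ) < (p : ℝ)^l * x ∧ (p : ℝ)^l * x < (j : ℝ) + 1) := by
  have hp1 : 1 ≤ p := by omega
  have hp0 : (0 : ℝ) < p := by exact_mod_cast hp1
  have hm1 : 1 ≤ (p - q) / 2 := by omega
  intro l
  induction l with
  | zero =>
    intro x hx j hj ⟨h1, h2⟩
    have hj1 : 1 ≤ j := by
      have := Nat.mod_le j p
      omega
    have : (1:ℝ) ≤ j := by exact_mod_cast hj1
    have := hx.2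
    simp only [pow_zero, one_mul] at h1
    linarith
  | succ l ih =>
    intro x hx j hj ⟨h1, h2⟩
    simp only [auxK, mem_iUnion, mem_image, exists_prop] at hx
    obtain ⟨a, ha, x', hx', rfl⟩ := hx
    have hxI := auxK_subset p q hp1 l hx'
    have hPl : (0:ℝ) < (p:ℝ)^l := pow_pos hp0 l
    have hkey : (p:ℝ)^(l+1) * ((x' + a) / p) = (p:ℝ)^l * x' + (p:ℝ)^l * a := by
      field_simp
      ring
    rw [hkey] at h1 h2
    -- j ≥ a * p^l and j < (a+1) * p^l
    have hge : a * p ^ l ≤ j := by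
      have : ((a * p^l : ℕ) : ℝ) < (j:ℝ) + 1 := by
        push_cast
        have := hxI.1
        nlinarith
      have h' : (a * p^l : ℕ) < j + 1 := by exact_mod_cast this
      omega
    have hlt : j < (a + 1) * p ^ l := by
      have : (j : ℝ) < (((a+1) * p^l : ℕ) : ℝ) := by
        push_cast
        have := hxI.2
        nlinarith
      exact_mod_cast this
    set j' := j - a * p ^ l with hj'def
    have hjsum : j' + a * p ^ l = j := Nat.sub_add_cancel hge
    have hj'lt : j' < p ^ l := by
      have he : (a + 1) * p ^ l = a * p ^ l + p ^ l := by ring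
      omega
    have hcast : (j' : ℝ) = (j : ℝ) - (a:ℝ) * (p:ℝ)^l := by
      rw [← hjsum]; push_cast; ring
    have h1' : (j' : ℝ) < (p:ℝ)^l * x' := by rw [hcast]; linarith
    have h2' : (p:ℝ)^l * x' < (j' : ℝ) + 1 := by rw [hcast]; linarith
    cases l with
    | zero =>
      -- j' = 0, j = a, so a central: contradiction with a ∈ auxDigits
      simp only [pow_zero, mul_one] at hjsum hj'lt
      have hja : j = a := by omega
      have hamod : a % p = a := Nat.mod_eq_of_lt ha.1
      rw [hja, hamod] at hj
      apply ha.2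
      omega
    | succ k =>
      have hmod : j' % p = (p - q) / 2 := by
        rw [← hjsum] at hj
        rw [pow_succ, ← mul_assoc] at hj
        rwa [Nat.add_mul_mod_self_right] at hj
      exact ih x' hx' j' hmod ⟨h1', h2'⟩

lemma exists_mod_right (p m N : ℕ) (hm : m < p) :
    ∃ j, j % p = m ∧ N < j ∧ j ≤ N + p := by
  have hp0 : 0 < p := by omega
  obtain ⟨d, r, hsplit, hr⟩ : ∃ d r, p * d + r = N ∧ r < p :=
    ⟨N / p, N % p, Nat.div_add_mod N p, Nat.mod_lt _ hp0⟩
  have hmod : ∀ c, (p * c + m) % p = m := fun c => by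
    rw [add_comm, Nat.add_mul_mod_self_left]; exact Nat.mod_eq_of_lt hm
  by_cases hc : r < m
  · exact ⟨p * d + m, hmod d, by omega, by omega⟩
  · refine ⟨p * (d + 1) + m, hmod (d+1), ?_, ?_⟩ <;>
    · have : p * (d + 1) = p * d + p := by ring
      omega

lemma exists_mod_left (p m N : ℕ) (hm : m < p) (hN : 2 * p ≤ N) :
    ∃ j, j % p = m ∧ j < N ∧ N ≤ j + 2 * p := by
  have hp0 : 0 < p := by omega
  obtain ⟨d, r, hsplit, hr⟩ : ∃ d r, p * d + r = N ∧ r < p :=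
    ⟨N / p, N % p, Nat.div_add_mod N p, Nat.mod_lt _ hp0⟩
  have hmod : ∀ c, (p * c + m) % p = m := fun c => by
    rw [add_comm, Nat.add_mul_mod_self_left]; exact Nat.mod_eq_of_lt hm
  by_cases hc : m < r
  · exact ⟨p * d + m, hmod d, by omega, by omega⟩
  · have hd1 : 1 ≤ d := by
      rcases Nat.eq_zero_or_pos d with rfl | h
      · simp at hsplit; omega
      · exact h
    obtain ⟨d', rfl⟩ : ∃ d', d = d' + 1 := ⟨d - 1, by omega⟩
    refine ⟨p * d' + m, hmod d', ?_, ?_⟩ <;>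
    · have : p * (d' + 1) = p * d' + p := by ring
      omega

lemma not_mem_carpet_of_hole (p q : ℕ) (hp : Odd p) (hqo : Odd q)
    (hq : 1 ≤ q) (hpq : q < p) (l j : ℕ) (hj : j % p = (p - q) / 2) (s : ℝ)
    (hs : (p : ℝ)^l * s = (j : ℝ) + 1/2) :
    (WithLp.toLp 2 ![s, 1/2] : EuclideanSpace ℝ (Fin 2)) ∉ sierpinskiCarpet p q := by
  intro hmem
  have h1 : (WithLp.toLp 2 ![s, 1/2] : EuclideanSpace ℝ (Fin 2)) ∈ levelRegion 2 p q l :=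
    mem_iInter.mp hmem l
  have h2 := mem_auxK_of_midline p q hp hqo hq hpq l s h1
  have hp2 : p % 2 = 1 := Nat.odd_iff.mp hp
  have hq2 : q % 2 = 1 := Nat.odd_iff.mp hqo
  exact auxK_avoid p q hq hpq hp2 hq2 l s h2 j hj ⟨by rw [hs]; linarith, by rw [hs]; linarith⟩

/-- Let `p > q ≥ 1` be odd integers. For every `t ∈ (0,1)` such that
`(t, 1/2) ∈ SC(p,q)` and every `ε > 0`, there exist `s₁ ∈ (t − ε, t) ∩ (0,1)` and
`s₂ ∈ (t, t + ε) ∩ (0,1)` with `(s₁, 1/2) ∉ SC(p,q)` and `(s₂, 1/2) ∉ SC(p,q)`. -/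
theorem sierpinskiCarpet_midline_holes (p q : ℕ) (hp : Odd p) (hqo : Odd q)
    (hq : 1 ≤ q) (hpq : q < p) :
    ∀ t ∈ Ioo (0 : ℝ) 1,
      (WithLp.toLp 2 ![t, 1 / 2] : EuclideanSpace ℝ (Fin 2)) ∈ sierpinskiCarpet p q →
      ∀ ε > (0 : ℝ),
        (∃ s₁ ∈ Ioo (t - ε) t ∩ Ioo (0 : ℝ) 1,
            (WithLp.toLp 2 ![s₁, 1 / 2] : EuclideanSpace ℝ (Fin 2)) ∉ sierpinskiCarpet p q) ∧
        ∃ s₂ ∈ Ioo t (t + ε) ∩ Ioo (0 : ℝ) 1,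
            (WithLp.toLp 2 ![s₂, 1 / 2] : EuclideanSpace ℝ (Fin 2)) ∉ sierpinskiCarpet p q := by
  intro t ht _hmem ε hε
  have hp2 : 2 ≤ p := by omega
  have hpR : (1:ℝ) < p := by exact_mod_cast hp2.trans_lt' (by norm_num)
  set δ := min ε (min t (1 - t)) with hδdef
  have hδε : δ ≤ ε := min_le_left _ _
  have hδt : δ ≤ t := (min_le_right _ _).trans (min_le_left _ _)
  have hδ1t : δ ≤ 1 - t := (min_le_right _ _).trans (min_le_right _ _)
  have hδpos : 0 < δ := lt_min hε (lt_min ht.1 (by linarith [ht.2]))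
  obtain ⟨l, hl⟩ := pow_unbounded_of_one_lt ((2*(p:ℝ)+2)/δ) hpR
  set P := (p:ℝ)^l with hPdef
  have hPpos : 0 < P := pow_pos (by linarith) l
  have hkey : 2*(p:ℝ)+2 < δ * P := by
    have := (div_lt_iff₀ hδpos).mp hl
    linarith
  set N := ⌊P * t⌋₊ with hNdef
  have hN1 : (N:ℝ) ≤ P * t := Nat.floor_le (mul_nonneg hPpos.le ht.1.le)
  have hN2 : P * t < N + 1 := Nat.lt_floor_add_one _
  set m := (p - q) / 2 with hmdef
  have hm : m < p := by omega
  have hPt : 2*(p:ℝ)+2 < P * t := by nlinarith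
  have hN2p : 2 * p ≤ N := by
    have h1 : (2*(p:ℕ)+1 : ℝ) < (N:ℝ) := by linarith
    have h2 : 2*p+1 < N := by exact_mod_cast h1
    omega
  constructor
  · -- left hole
    obtain ⟨j, hjm, hj1, hj2⟩ := exists_mod_left p m N hm hN2p
    set s₁ := ((j:ℝ) + 1/2) / P with hs₁def
    have hs : P * s₁ = (j:ℝ) + 1/2 := by
      rw [hs₁def]; field_simp
    have hjN : (j:ℝ) + 1 ≤ N := by exact_mod_cast hj1
    have hNj : (N:ℝ) ≤ (j:ℝ) + 2*p := by exact_mod_cast hj2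
    have hlt : s₁ < t := by
      have : P * s₁ < P * t := by rw [hs]; linarith
      exact lt_of_mul_lt_mul_left this hPpos.le
    have hgt : t - ε < s₁ := by
      have : P * (t - ε) < P * s₁ := by
        rw [hs]
        have : P * (t - ε) ≤ P * t - δ * P := by nlinarith
        linarith
      exact lt_of_mul_lt_mul_left this hPpos.le
    have hpos : 0 < s₁ := by
      apply div_pos _ hPpos
      positivity
    exact ⟨s₁, ⟨⟨hgt, hlt⟩, hpos, hlt.trans ht.2⟩,
      not_mem_carpet_of_hole p q hp hqo hq hpq l j hjm s₁ hs⟩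
  · -- right hole
    obtain ⟨j, hjm, hj1, hj2⟩ := exists_mod_right p m N hm
    set s₂ := ((j:ℝ) + 1/2) / P with hs₂def
    have hs : P * s₂ = (j:ℝ) + 1/2 := by
      rw [hs₂def]; field_simp
    have hNj : (N:ℝ) + 1 ≤ (j:ℝ) := by exact_mod_cast hj1
    have hjN : (j:ℝ) ≤ (N:ℝ) + p := by exact_mod_cast hj2
    have hgt : t < s₂ := by
      have : P * t < P * s₂ := by rw [hs]; linarith
      exact lt_of_mul_lt_mul_left this hPpos.le
    have hlt : s₂ < t + ε := by
      have : P * s₂ < P * (t + ε) := by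
        rw [hs]
        have : P * t + δ * P ≤ P * (t + ε) := by nlinarith
        linarith
      exact lt_of_mul_lt_mul_left this hPpos.le
    have hlt1 : s₂ < 1 := by
      have : P * s₂ < P * 1 := by
        rw [hs, mul_one]
        have : P * t + δ * P ≤ P := by nlinarith
        linarith
      exact lt_of_mul_lt_mul_left this hPpos.le
    exact ⟨s₂, ⟨⟨hgt, hlt⟩, ht.1.trans hgt, hlt1⟩,
      not_mem_carpet_of_hole p q hp hqo hq hpq l j hjm s₂ hs⟩
end

section
/- For all integers n ≥ 1 and p > q ≥ 1 with p ≡ q (mod 2) and every level l ≥ 0, the n-dimensional Lebesgue measure of the level-l region Ωₗ equals ((pⁿ − qⁿ)/pⁿ)ˡ. (Equivalently, Ωₗ consists of (pⁿ − qⁿ)ˡ closed cubes of side p⁻ˡ overlapping only in measure-zero faces; this quantifies the space-overhead reduction of the fractal codes.) -/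
open Set

open MeasureTheory Pointwise


section aux
variable {n p q : ℕ}

lemma simMap_eq (a : Fin n → ℕ) :
    simMap n p a = fun x => (WithLp.toLp 2 (fun i => (a i : ℝ) / p) : EuclideanSpace ℝ (Fin n)) +ᵥ
      ((p : ℝ)⁻¹ • x) := by
  funext x
  ext i
  show (x i + a i) / p = (a i : ℝ) / p + (p:ℝ)⁻¹ * x i
  rw [inv_mul_eq_div, ← add_div, add_comm]

lemma continuous_simMap (a : Fin n → ℕ) : Continuous (simMap n p a) := by
  rw [simMap_eq a]
  exact (continuous_const_smul (T := EuclideanSpace ℝ (Fin n)) ((p : ℝ)⁻¹)).const_vadd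
    (WithLp.toLp 2 (fun i => (a i : ℝ) / p) : EuclideanSpace ℝ (Fin n))

lemma digitSet_finite : (digitSet n p q).Finite := by
  apply Set.Finite.subset (Set.Finite.pi (fun i : Fin n => Set.finite_Iio p))
  intro a ha
  exact fun i _ => ha.1 i

lemma isCompact_levelRegion (l : ℕ) : IsCompact (levelRegion n p q l) := by
  induction l with
  | zero =>
      have h : levelRegion n p q 0 =
          (EuclideanSpace.equiv (Fin n) ℝ).toHomeomorph ⁻¹'
            (Set.pi univ fun _ => Icc (0:ℝ) 1) := by
        ext x
        simp only [levelRegion, mem_preimage, Set.mem_pi, mem_univ, forall_true_left]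
        rfl
      rw [h, (EuclideanSpace.equiv (Fin n) ℝ).toHomeomorph.isCompact_preimage]
      exact isCompact_univ_pi fun i => isCompact_Icc
  | succ l ih =>
      exact (digitSet_finite).isCompact_biUnion fun a _ => ih.image (continuous_simMap a)

lemma levelRegion_subset_unit (hp : 0 < p) (l : ℕ) :
    levelRegion n p q l ⊆ {x | ∀ i, x i ∈ Icc (0 : ℝ) 1} := by
  induction l with
  | zero => exact subset_rfl
  | succ l ih =>
      intro x hx
      simp only [levelRegion, mem_iUnion] at hx
      obtain ⟨a, ha, y, hy, rfl⟩ := hx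
      intro i
      have hy' := (ih hy) i
      have hai : (a i : ℝ) ≤ (p : ℝ) - 1 := by
        have h1 : a i + 1 ≤ p := ha.1 i
        have h2 : (a i : ℝ) + 1 ≤ (p : ℝ) := by exact_mod_cast h1
        linarith
      have hp' : (0:ℝ) < p := by exact_mod_cast hp
      show (y i + (a i : ℝ)) / p ∈ Icc (0:ℝ) 1
      constructor
      · apply div_nonneg _ hp'.le
        have : (0:ℝ) ≤ (a i : ℝ) := Nat.cast_nonneg _
        linarith [hy'.1]
      · rw [div_le_one hp']
        linarith [hy'.2]

lemma image_subset_cube (hp : 0 < p) (a : Fin n → ℕ) (l : ℕ) :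
    simMap n p a '' levelRegion n p q l ⊆
      {x | ∀ i, x i ∈ Icc ((a i : ℝ) / p) (((a i : ℝ) + 1) / p)} := by
  rintro x ⟨y, hy, rfl⟩ i
  have hy' := (levelRegion_subset_unit hp l hy) i
  have hp' : (0:ℝ) < p := by exact_mod_cast hp
  show (y i + (a i : ℝ)) / p ∈ Icc ((a i : ℝ) / p) (((a i : ℝ) + 1) / p)
  have hp'' : (0:ℝ) < p := hp'
  constructor
  · exact (div_le_div_iff_of_pos_right hp'').mpr (by linarith [hy'.1])
  · exact (div_le_div_iff_of_pos_right hp'').mpr (by linarith [hy'.2])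

lemma volume_hyperplane (i : Fin n) (c : ℝ) :
    volume {x : EuclideanSpace ℝ (Fin n) | x i = c} = 0 := by
  have he := EuclideanSpace.volume_preserving_symm_measurableEquiv_toLp (Fin n)
  have h : {x : EuclideanSpace ℝ (Fin n) | x i = c} =
      (MeasurableEquiv.toLp 2 (Fin n → ℝ)).symm ⁻¹' {y : Fin n → ℝ | y i = c} := rfl
  rw [h, MeasurePreserving.measure_preimage he
    (MeasurableSet.nullMeasurableSet
      (measurableSet_eq_fun (measurable_pi_apply i) measurable_const)),
    volume_pi]
  exact Measure.pi_hyperplane (fun _ => (volume : Measure ℝ)) i c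

lemma volume_simMap_image (a : Fin n → ℕ) (s : Set (EuclideanSpace ℝ (Fin n))) :
    volume (simMap n p a '' s) = ENNReal.ofReal (((p:ℝ)⁻¹) ^ n) * volume s := by
  rw [simMap_eq a]
  have h : (fun x => (WithLp.toLp 2 (fun i => (a i : ℝ) / p) : EuclideanSpace ℝ (Fin n)) +ᵥ
      ((p : ℝ)⁻¹ • x)) '' s
      = (WithLp.toLp 2 (fun i => (a i : ℝ) / p) : EuclideanSpace ℝ (Fin n)) +ᵥ
        ((p:ℝ)⁻¹ • s : Set (EuclideanSpace ℝ (Fin n))) := by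
    rw [← Set.image_vadd, ← Set.image_smul, Set.image_image]
  rw [h, measure_vadd, Measure.addHaar_smul, finrank_euclideanSpace_fin, inv_pow,
    abs_of_nonneg (by positivity)]

end aux

def digitFinset (n p q : ℕ) : Finset (Fin n → ℕ) :=
  (Fintype.piFinset fun _ : Fin n => Finset.range p).filter
    (fun a => ¬ ∀ i, (p - q) / 2 ≤ a i ∧ a i ≤ (p - q) / 2 + q - 1)

lemma coe_digitFinset (n p q : ℕ) : ↑(digitFinset n p q) = digitSet n p q := by
  ext a
  simp [digitFinset, digitSet, Fintype.mem_piFinset]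

lemma card_digitFinset (n p q : ℕ) (hq : 1 ≤ q) (hpq : q < p) (hmod : p % 2 = q % 2) :
    (digitFinset n p q).card = p ^ n - q ^ n := by
  have key : (Fintype.piFinset fun _ : Fin n => Finset.range p).filter
      (fun a => ∀ i, (p - q) / 2 ≤ a i ∧ a i ≤ (p - q) / 2 + q - 1)
      = Fintype.piFinset (fun _ : Fin n => Finset.Icc ((p - q) / 2) ((p - q) / 2 + q - 1)) := by
    ext a
    simp only [Finset.mem_filter, Fintype.mem_piFinset, Finset.mem_range, Finset.mem_Icc]
    constructor
    · rintro ⟨_, h2⟩ i; exact h2 i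
    · intro h
      refine ⟨fun i => ?_, h⟩
      have := h i
      omega
  have hcard : ((Fintype.piFinset fun _ : Fin n => Finset.range p).filter
      (fun a => ∀ i, (p - q) / 2 ≤ a i ∧ a i ≤ (p - q) / 2 + q - 1)).card = q ^ n := by
    rw [key, Fintype.card_piFinset]
    have hq' : ((p - q) / 2 + q - 1 + 1 - (p - q) / 2) = q := by omega
    simp [Nat.card_Icc, hq']
  have htotal : (Fintype.piFinset fun _ : Fin n => Finset.range p).card = p ^ n := by
    rw [Fintype.card_piFinset]
    simp
  unfold digitFinset
  rw [Finset.filter_not, Finset.card_sdiff_of_subset (Finset.filter_subset _ _), htotal, hcard]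


/-- For all integers `n ≥ 1` and `p > q ≥ 1` with `p ≡ q (mod 2)` and
every level `l ≥ 0`, the `n`-dimensional Lebesgue measure of the level-`l` region `Ωₗ`
equals `((pⁿ − qⁿ)/pⁿ)ˡ`. -/
theorem volume_levelRegion (n p q : ℕ) (hn : 1 ≤ n) (hq : 1 ≤ q) (hpq : q < p)
    (hmod : p % 2 = q % 2) (l : ℕ) :
    volume (levelRegion n p q l) =
      ENNReal.ofReal ((((p : ℝ) ^ n - (q : ℝ) ^ n) / (p : ℝ) ^ n) ^ l) := by
  have hp : 0 < p := lt_trans (by omega) hpq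
  have hp' : (0:ℝ) < p := by exact_mod_cast hp
  have hqp : (q:ℝ) ^ n ≤ (p:ℝ) ^ n := by
    apply pow_le_pow_left₀ (by positivity)
    exact_mod_cast hpq.le
  induction l with
  | zero =>
      have he := EuclideanSpace.volume_preserving_symm_measurableEquiv_toLp (Fin n)
      have h : levelRegion n p q 0 =
          (MeasurableEquiv.toLp 2 (Fin n → ℝ)).symm ⁻¹'
            (Set.pi univ fun _ : Fin n => Icc (0:ℝ) 1) := by
        ext x
        simp only [levelRegion, mem_preimage, Set.mem_pi, mem_univ, forall_true_left]
        rfl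
      rw [h, MeasurePreserving.measure_preimage he
        (MeasurableSet.nullMeasurableSet
          (MeasurableSet.univ_pi fun i => measurableSet_Icc)),
        volume_pi_pi]
      simp [Real.volume_Icc]
  | succ l ih =>
      have hdisj : (↑(digitFinset n p q) : Set (Fin n → ℕ)).Pairwise
          (Function.onFun (AEDisjoint volume) fun a => simMap n p a '' levelRegion n p q l) := by
        intro a _ b _ hab
        obtain ⟨i, hi⟩ := Function.ne_iff.mp hab
        refine measure_mono_null ?_
          (volume_hyperplane i (((max (a i) (b i) : ℕ) : ℝ) / p))
        intro x hx
        have hxa := image_subset_cube hp a l hx.1 i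
        have hxb := image_subset_cube hp b l hx.2 i
        show x i = ((max (a i) (b i) : ℕ) : ℝ) / p
        rcases lt_or_gt_of_ne hi with h | h
        · rw [max_eq_right h.le]
          have hab1 : (a i : ℝ) + 1 ≤ (b i : ℝ) := by exact_mod_cast h
          exact le_antisymm (hxa.2.trans ((div_le_div_iff_of_pos_right hp').mpr hab1)) hxb.1
        · rw [max_eq_left h.le]
          have hab1 : (b i : ℝ) + 1 ≤ (a i : ℝ) := by exact_mod_cast h
          exact le_antisymm (hxb.2.trans ((div_le_div_iff_of_pos_right hp').mpr hab1)) hxa.1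
      have hmeas : ∀ b ∈ digitFinset n p q,
          NullMeasurableSet (simMap n p b '' levelRegion n p q l) volume :=
        fun b _ => (((isCompact_levelRegion l).image
          (continuous_simMap b)).isClosed.measurableSet).nullMeasurableSet
      have hstep : levelRegion n p q (l+1)
          = ⋃ a ∈ digitFinset n p q, simMap n p a '' levelRegion n p q l := by
        simp only [levelRegion, ← coe_digitFinset, Finset.set_biUnion_coe]
      rw [hstep, measure_biUnion_finset₀ hdisj hmeas]
      have hval : ∀ a ∈ digitFinset n p q,
          volume (simMap n p a '' levelRegion n p q l)
            = ENNReal.ofReal (((p:ℝ)⁻¹) ^ n) *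
              ENNReal.ofReal ((((p : ℝ) ^ n - (q : ℝ) ^ n) / (p : ℝ) ^ n) ^ l) := by
        intro a _
        rw [volume_simMap_image, ih]
      rw [Finset.sum_congr rfl hval, Finset.sum_const,
        card_digitFinset n p q hq hpq hmod, nsmul_eq_mul]
      have hle : q ^ n ≤ p ^ n := Nat.pow_le_pow_left hpq.le n
      have hc : ((p ^ n - q ^ n : ℕ) : ENNReal)
          = ENNReal.ofReal ((p:ℝ) ^ n - (q:ℝ) ^ n) := by
        rw [← ENNReal.ofReal_natCast, Nat.cast_sub hle]
        push_cast
        rfl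
      rw [hc, ← ENNReal.ofReal_mul (by positivity), ← ENNReal.ofReal_mul (by linarith)]
      congr 1
      rw [inv_pow, pow_succ', div_eq_mul_inv, mul_assoc]
end
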